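/- Let G = (V,D,B) be an acyclic mixed graph and let V' ⊆ V be an ancestral subset. If the induced subgraph G_{V'} is generically identifiable, then all edge coefficients of G corresponding to edges of G_{V'} are generically identifiable in G; that is, there is a proper algebraic subset A of Θ_G such that for any two parameter pairs (Λ,Ω), (Λ̃,Ω̃) ∈ Θ_G ∖ A with φ_G(Λ,Ω) = φ_G(Λ̃,Ω̃), one has λ_{vw} = λ̃_{vw} for all (v,w) ∈ D with v,w ∈ V' and ω_{vw} = ω̃_{vw} for all v,w ∈ V'. -/

import Mathlib

open scoped Classical Matrix

/-- The directed part of the graph contains no directed cycle. -/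
def Acyclic {n : ℕ} (D : Finset (Fin n × Fin n)) : Prop :=
  ∀ v : Fin n, ¬ Relation.TransGen (fun a b => (a, b) ∈ D) v v

/-- Mixed graph axioms: the bidirected edge set is symmetric and there are no self loops. -/
def IsMixedGraph {n : ℕ} (D B : Finset (Fin n × Fin n)) : Prop :=
  (∀ v w : Fin n, (v, w) ∈ B → (w, v) ∈ B) ∧ ∀ v : Fin n, (v, v) ∉ D ∧ (v, v) ∉ B

/-- `IsTrek D B v w L R`: `L` is the left side of a trek from `v` to `w`, listed from the top
node down to the source `v` (consecutive vertices joined by directed edges pointing towards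
`v`); `R` is the right side, listed from the top down to the target `w`.  Either the two tops
coincide (no bidirected edge) or they are joined by a bidirected edge. -/
def IsTrek {n : ℕ} (D B : Finset (Fin n × Fin n)) (v w : Fin n)
    (L R : List (Fin n)) : Prop :=
  L ≠ [] ∧ R ≠ [] ∧
    L.Chain' (fun a b => (a, b) ∈ D) ∧ R.Chain' (fun a b => (a, b) ∈ D) ∧
    L.getLast? = some v ∧ R.getLast? = some w ∧
    (L.head? = R.head? ∨
      ∃ u z : Fin n, L.head? = some u ∧ R.head? = some z ∧ (u, z) ∈ B)

/-- Product of the matrix entries `Λ x y` over the consecutive pairs `(x, y)` of a list,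
i.e. the product of the directed-edge coefficients along a directed path. -/
noncomputable def edgeProd {n : ℕ} (Λ : Matrix (Fin n) (Fin n) ℝ) :
    List (Fin n) → ℝ
  | [] => 1
  | [_] => 1
  | x :: y :: rest => Λ x y * edgeProd Λ (y :: rest)

/-- The trek monomial of the trek with sides `L`, `R`. -/
noncomputable def trekWeight {n : ℕ} (Λ Ω : Matrix (Fin n) (Fin n) ℝ)
    (L R : List (Fin n)) : ℝ :=
  (match L.head?, R.head? with
    | some u, some z => Ω u z
    | _, _ => 0) * edgeProd Λ L * edgeProd Λ R

/-- `u` is an ancestor of `v`: there is a (possibly empty) directed path from `u` to `v`. -/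
def IsAncestor {n : ℕ} (D : Finset (Fin n × Fin n)) (u v : Fin n) : Prop :=
  Relation.ReflTransGen (fun a b => (a, b) ∈ D) u v

/-- `V'` is an ancestral subset: it contains all ancestors of its members. -/
def Ancestral {n : ℕ} (D : Finset (Fin n × Fin n)) (V' : Finset (Fin n)) : Prop :=
  ∀ u v : Fin n, IsAncestor D u v → v ∈ V' → u ∈ V'

/-- The parents of `v`. -/
def paF {n : ℕ} (D : Finset (Fin n × Fin n)) (v : Fin n) : Finset (Fin n) :=
  Finset.univ.filter fun w => (w, v) ∈ D

/-- `htr D B v`: the set of vertices `w ∉ {v} ∪ sib(v)` reachable from `v` by a half-trek. -/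
def htr {n : ℕ} (D B : Finset (Fin n × Fin n)) (v : Fin n) : Set (Fin n) :=
  {w | w ≠ v ∧ (v, w) ∉ B ∧ ∃ R, IsTrek D B v w [v] R}

/-- `Y` satisfies the half-trek criterion with respect to `v`: `|Y| = |pa(v)|`,
`Y ∩ ({v} ∪ sib(v)) = ∅`, and there is a system of half-treks with no sided intersection
from `Y` to `pa(v)` (given by a source `src p ∈ Y` and a right side `R p` for each parent
`p`, with pairwise distinct sources and pairwise disjoint right sides). -/
def SatisfiesHTC {n : ℕ} (D B : Finset (Fin n × Fin n)) (v : Fin n)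
    (Y : Finset (Fin n)) : Prop :=
  Y.card = (paF D v).card ∧
    (∀ y ∈ Y, y ≠ v ∧ (y, v) ∉ B) ∧
    ∃ (src : Fin n → Fin n) (R : Fin n → List (Fin n)),
      (∀ p ∈ paF D v, src p ∈ Y ∧ IsTrek D B (src p) p [src p] (R p)) ∧
      ∀ p ∈ paF D v, ∀ q ∈ paF D v, p ≠ q →
        src p ≠ src q ∧ ∀ x ∈ R p, x ∉ R q

/-- The parameter space `Θ = ℝ^D × PD(B)`. -/
def Theta {α : Type} [Fintype α] (D B : Set (α × α)) :
    Set (Matrix α α ℝ × Matrix α α ℝ) :=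
  {p : Matrix α α ℝ × Matrix α α ℝ |
    (∀ v w : α, p.1 v w ≠ 0 → (v, w) ∈ D) ∧
      p.2.PosDef ∧ ∀ v w : α, v ≠ w → p.2 v w ≠ 0 → (v, w) ∈ B}

/-- The parameterization map `φ(Λ, Ω) = (I - Λ)⁻ᵀ Ω (I - Λ)⁻¹`. -/
noncomputable def phi {α : Type} [Fintype α] [DecidableEq α]
    (p : Matrix α α ℝ × Matrix α α ℝ) : Matrix α α ℝ :=
  ((1 - p.1)⁻¹)ᵀ * p.2 * (1 - p.1)⁻¹

/-- Evaluation of a polynomial in the entries of the two parameter matrices. -/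
noncomputable def polyEval {α : Type} [Fintype α]
    (f : MvPolynomial ((α × α) ⊕ (α × α)) ℝ)
    (p : Matrix α α ℝ × Matrix α α ℝ) : ℝ :=
  MvPolynomial.eval (Sum.elim (fun e => p.1 e.1 e.2) (fun e => p.2 e.1 e.2)) f

/-- `A` is a proper algebraic subset of `Θ`: the intersection of `Θ` with the zero set of a
polynomial in the matrix entries that does not vanish identically on `Θ`. -/
def IsProperAlg {α : Type} [Fintype α]
    (Θ A : Set (Matrix α α ℝ × Matrix α α ℝ)) : Prop :=
  ∃ f : MvPolynomial ((α × α) ⊕ (α × α)) ℝ,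
    (∃ p ∈ Θ, polyEval f p ≠ 0) ∧ A = {p ∈ Θ | polyEval f p = 0}

/-- Generic identifiability: `φ` is injective off a proper algebraic subset. -/
def GenId {α : Type} [Fintype α] [DecidableEq α] (D B : Set (α × α)) : Prop :=
  ∃ A, IsProperAlg (Theta D B) A ∧
    ∀ p ∈ Theta D B \ A, ∀ q ∈ Theta D B \ A, phi p = phi q → p = q

/-- Generic identifiability of the single coefficient `λ_{uv}`. -/
def GenIdLambda {α : Type} [Fintype α] [DecidableEq α] (D B : Set (α × α))
    (u v : α) : Prop :=
  ∃ A, IsProperAlg (Theta D B) A ∧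
    ∀ p ∈ Theta D B \ A, ∀ q ∈ Theta D B \ A, phi p = phi q → p.1 u v = q.1 u v

/-- Generic identifiability of the single coefficient `ω_{uv}`. -/
def GenIdOmega {α : Type} [Fintype α] [DecidableEq α] (D B : Set (α × α))
    (u v : α) : Prop :=
  ∃ A, IsProperAlg (Theta D B) A ∧
    ∀ p ∈ Theta D B \ A, ∀ q ∈ Theta D B \ A, phi p = phi q → p.2 u v = q.2 u v

/-- Generic identifiability of the coefficient vector `Λ_{pa(v), v}`. -/
def GenIdCol {α : Type} [Fintype α] [DecidableEq α] (D B : Set (α × α))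
    (v : α) : Prop :=
  ∃ A, IsProperAlg (Theta D B) A ∧
    ∀ p ∈ Theta D B \ A, ∀ q ∈ Theta D B \ A, phi p = phi q →
      ∀ u : α, (u, v) ∈ D → p.1 u v = q.1 u v

/-- The fiber of the parameter point `p` within `Θ`. -/
def fiber {α : Type} [Fintype α] [DecidableEq α] (D B : Set (α × α))
    (p : Matrix α α ℝ × Matrix α α ℝ) :
    Set (Matrix α α ℝ × Matrix α α ℝ) :=
  {q ∈ Theta D B | phi q = phi p}

/-- Generically infinite-to-one. -/
def GenInfToOne {α : Type} [Fintype α] [DecidableEq α] (D B : Set (α × α)) : Prop :=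
  ∃ A, IsProperAlg (Theta D B) A ∧
    ∀ p ∈ Theta D B \ A, (fiber D B p).Infinite

/-- Generically `h`-to-one: every fiber off a proper algebraic subset has exactly `h` points. -/
def GenHToOne {α : Type} [Fintype α] [DecidableEq α] (D B : Set (α × α))
    (h : ℕ) : Prop :=
  ∃ A, IsProperAlg (Theta D B) A ∧
    ∀ p ∈ Theta D B \ A, (fiber D B p).Finite ∧ (fiber D B p).ncard = h

/-- `w` lies in the connected component of `c` in the bidirected part `(V, B)`. -/
def bidirConn {n : ℕ} (B : Finset (Fin n × Fin n)) (c w : Fin n) : Prop :=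
  Relation.ReflTransGen (fun a b => (a, b) ∈ B) c w

/-- The connected component `C` of `c` in the bidirected part. -/
noncomputable def Cset {n : ℕ} (B : Finset (Fin n × Fin n)) (c : Fin n) :
    Finset (Fin n) :=
  Finset.univ.filter (bidirConn B c)

/-- The vertex set `V_i = C_i ∪ pa(C_i)` of the mixed component of `c`. -/
noncomputable def Vset {n : ℕ} (D B : Finset (Fin n × Fin n)) (c : Fin n) :
    Finset (Fin n) :=
  Cset B c ∪ Finset.univ.filter fun v => ∃ w ∈ Cset B c, (v, w) ∈ D

/-- The directed edges `D_i = {(v, w) ∈ D : v ∈ V_i, w ∈ C_i}` of the mixed component of `c`. -/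
def compD {n : ℕ} (D B : Finset (Fin n × Fin n)) (c : Fin n) :
    Set (↥(Vset D B c) × ↥(Vset D B c)) :=
  {e | ((e.1 : Fin n), (e.2 : Fin n)) ∈ D ∧ (e.2 : Fin n) ∈ Cset B c}

/-- The bidirected edges `B_i = {(v, w) ∈ B : v, w ∈ C_i}` of the mixed component of `c`. -/
def compB {n : ℕ} (D B : Finset (Fin n × Fin n)) (c : Fin n) :
    Set (↥(Vset D B c) × ↥(Vset D B c)) :=
  {e | ((e.1 : Fin n), (e.2 : Fin n)) ∈ B ∧ (e.1 : Fin n) ∈ Cset B c ∧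
    (e.2 : Fin n) ∈ Cset B c}

/-- The edges of the induced subgraph `G_{V'}`, as pairs of vertices of the subtype `V'`. -/
def inducedE {n : ℕ} (E : Finset (Fin n × Fin n)) (V' : Finset (Fin n)) :
    Set (↥V' × ↥V') :=
  {e | ((e.1 : Fin n), (e.2 : Fin n)) ∈ E}


/-! ### Auxiliary lemmas for `stmt5` -/

/-- Sum over all of `Fin n` of a function vanishing off `V'` equals the sum over the subtype. -/
lemma sum_restrict {n : ℕ} (V' : Finset (Fin n)) (f : Fin n → ℝ)
    (hf : ∀ u, u ∉ V' → f u = 0) : ∑ u, f u = ∑ u : ↥V', f ↑u := by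
  rw [Finset.sum_coe_sort]
  exact (Finset.sum_subset (Finset.subset_univ V') (fun u _ hu => hf u hu)).symm

/-- A matrix supported on an acyclic relation is nilpotent, hence `1 - Λ` is a unit. -/
lemma isUnit_one_sub_of_acyclic {α : Type} [Fintype α] [DecidableEq α]
    (r : α → α → Prop) (hr : ∀ v, ¬ Relation.TransGen r v v)
    (Λ : Matrix α α ℝ) (h : ∀ v w, Λ v w ≠ 0 → r v w) :
    IsUnit (1 - Λ) := by
  classical
  set rk : α → ℕ := fun v => (Finset.univ.filter (fun u => Relation.TransGen r u v)).card with hrk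
  have hstep : ∀ v w, r v w → rk v < rk w := by
    intro v w hvw
    apply Finset.card_lt_card
    constructor
    · intro u hu
      simp only [Finset.mem_filter, Finset.mem_univ, true_and] at hu ⊢
      exact hu.tail hvw
    · intro hsub
      have hv : v ∈ Finset.univ.filter (fun u => Relation.TransGen r u w) := by
        simp only [Finset.mem_filter, Finset.mem_univ, true_and]
        exact Relation.TransGen.single hvw
      have := hsub hv
      simp only [Finset.mem_filter, Finset.mem_univ, true_and] at this
      exact hr v this
  have key : ∀ k v w, (Λ ^ k) v w ≠ 0 → k + rk v ≤ rk w := by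
    intro k
    induction k with
    | zero =>
      intro v w h0
      rw [pow_zero] at h0
      by_cases hvw : v = w
      · simp [hvw]
      · exact absurd (Matrix.one_apply_ne hvw) h0
    | succ k ih =>
      intro v w h0
      rw [pow_succ, Matrix.mul_apply] at h0
      obtain ⟨u, -, hu⟩ := Finset.exists_ne_zero_of_sum_ne_zero h0
      have h1 := ih v u (left_ne_zero_of_mul hu)
      have h2 := hstep u w (h u w (right_ne_zero_of_mul hu))
      omega
  have hnil : IsNilpotent Λ := by
    refine ⟨Fintype.card α, ?_⟩
    ext v w
    by_contra h0
    have h1 := key _ v w h0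
    have h2 : rk w < Fintype.card α := by
      have : Finset.univ.filter (fun u => Relation.TransGen r u w) ⊂ Finset.univ := by
        refine ⟨Finset.subset_univ _, fun hsub => ?_⟩
        have := hsub (Finset.mem_univ w)
        simp only [Finset.mem_filter, Finset.mem_univ, true_and] at this
        exact hr w this
      simpa [Finset.card_univ] using Finset.card_lt_card this
    omega
  exact hnil.isUnit_one_sub

/-- A principal submatrix of a positive definite matrix is positive definite. -/
lemma posDef_submatrix {n : ℕ} {V' : Finset (Fin n)} {Ω : Matrix (Fin n) (Fin n) ℝ}
    (hΩ : Ω.PosDef) :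
    (Ω.submatrix (Subtype.val : ↥V' → Fin n) Subtype.val).PosDef := by
  refine Matrix.posDef_iff_dotProduct_mulVec.mpr ⟨?_, ?_⟩
  · exact hΩ.1.submatrix _
  · intro x hx
    set xe : Fin n → ℝ := fun v => if h : v ∈ V' then x ⟨v, h⟩ else 0 with hxe
    have hxe_coe : ∀ b : ↥V', xe ↑b = x b := by
      intro b; simp [hxe]
    have hxe0 : ∀ v, v ∉ V' → xe v = 0 := fun v hv => dif_neg hv
    have hxen : xe ≠ 0 := by
      obtain ⟨b, hb⟩ := Function.ne_iff.mp hx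
      intro hcon
      apply hb
      have := congrFun hcon ↑b
      rwa [hxe_coe] at this
    have hquad : star xe ⬝ᵥ (Ω *ᵥ xe) =
        star x ⬝ᵥ ((Ω.submatrix (Subtype.val : ↥V' → Fin n) Subtype.val) *ᵥ x) := by
      have hstar : star xe = xe := by funext v; simp
      have hstar' : star x = x := by funext v; simp
      rw [hstar, hstar']
      simp only [dotProduct]
      rw [sum_restrict V' _ (by
        intro u hu
        rw [hxe0 u hu, zero_mul])]
      apply Finset.sum_congr rfl
      intro b _
      rw [hxe_coe]
      congr 1
      simp only [Matrix.mulVec, dotProduct]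
      rw [sum_restrict V' _ (by
        intro u hu
        rw [hxe0 u hu, mul_zero])]
      apply Finset.sum_congr rfl
      intro c _
      rw [hxe_coe]
      rfl
    rw [← hquad]
    exact hΩ.dotProduct_mulVec_pos hxen

/-- Extension of a matrix on `V'` by zero off the `V' × V'` block. -/
noncomputable def extLambda {n : ℕ} (V' : Finset (Fin n)) (Λ' : Matrix ↥V' ↥V' ℝ) :
    Matrix (Fin n) (Fin n) ℝ :=
  Matrix.of fun v w =>
    if hv : v ∈ V' then (if hw : w ∈ V' then Λ' ⟨v, hv⟩ ⟨w, hw⟩ else 0) else 0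

/-- Extension of a matrix on `V'` by the identity off the `V' × V'` block. -/
noncomputable def extOmega {n : ℕ} (V' : Finset (Fin n)) (Ω' : Matrix ↥V' ↥V' ℝ) :
    Matrix (Fin n) (Fin n) ℝ :=
  Matrix.of fun v w =>
    if hv : v ∈ V' then (if hw : w ∈ V' then Ω' ⟨v, hv⟩ ⟨w, hw⟩ else 0)
    else (if v = w then 1 else 0)

lemma extOmega_posDef {n : ℕ} {V' : Finset (Fin n)} {Ω' : Matrix ↥V' ↥V' ℝ}
    (hΩ' : Ω'.PosDef) : (extOmega V' Ω').PosDef := by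
  have happly : ∀ a b : ↥V', extOmega V' Ω' ↑a ↑b = Ω' a b := by
    intro a b; simp [extOmega]
  have hsym : ∀ a b : ↥V', Ω' a b = Ω' b a := by
    intro a b
    have := congrFun (congrFun hΩ'.1 b) a
    rw [Matrix.conjTranspose_apply, star_trivial] at this
    exact this
  refine Matrix.posDef_iff_dotProduct_mulVec.mpr ⟨?_, ?_⟩
  · rw [Matrix.IsHermitian]
    ext v w
    rw [Matrix.conjTranspose_apply]
    rw [show star (extOmega V' Ω' w v) = extOmega V' Ω' w v from star_trivial _]
    by_cases hv : v ∈ V' <;> by_cases hw : w ∈ V'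
    · simp only [extOmega, Matrix.of_apply, dif_pos hv, dif_pos hw]
      exact hsym _ _
    · simp only [extOmega, Matrix.of_apply, dif_pos hv, dif_neg hw]
      rw [if_neg (show ¬ w = v from fun h => hw (h ▸ hv))]
    · simp only [extOmega, Matrix.of_apply, dif_pos hw, dif_neg hv]
      rw [if_neg (show ¬ v = w from fun h => hv (h ▸ hw))]
    · simp only [extOmega, Matrix.of_apply, dif_neg hv, dif_neg hw]
      by_cases hvw : v = w <;> simp [hvw, eq_comm]
  · intro x hx
    set x' : ↥V' → ℝ := fun b => x ↑b with hx'
    have hsplit : star x ⬝ᵥ (extOmega V' Ω' *ᵥ x) =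
        (star x' ⬝ᵥ (Ω' *ᵥ x')) + ∑ v ∈ Finset.univ.filter (fun v => v ∉ V'), x v * x v := by
      rw [show star x = x from by funext v; simp,
        show star x' = x' from by funext v; simp]
      simp only [dotProduct]
      rw [← Finset.sum_filter_add_sum_filter_not Finset.univ (fun v => v ∈ V')]
      congr 1
      · have h1 : Finset.univ.filter (fun v => v ∈ V') = V' := by
          ext v; simp
        rw [h1, ← Finset.sum_coe_sort]
        apply Finset.sum_congr rfl
        intro b _
        congr 1
        simp only [Matrix.mulVec, dotProduct]
        rw [sum_restrict V' _ (by
          intro u hu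
          rw [show extOmega V' Ω' ↑b u = 0 from by simp [extOmega, hu], zero_mul])]
        apply Finset.sum_congr rfl
        intro c _
        rw [happly]
      · apply Finset.sum_congr rfl
        intro v hv
        rw [Finset.mem_filter] at hv
        congr 1
        simp only [Matrix.mulVec, dotProduct]
        rw [show (fun w => extOmega V' Ω' v w * x w) = fun w => if v = w then x w else 0 from by
          funext w
          by_cases hvw : v = w
          · subst hvw; simp [extOmega, hv.2]
          · simp [extOmega, hv.2, hvw]]
        simp
    rw [hsplit]
    by_cases hx'0 : x' = 0
    · have hv : ∃ v ∈ Finset.univ.filter (fun v => v ∉ V'), x v ≠ 0 := by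
        obtain ⟨v, hv⟩ := Function.ne_iff.mp hx
        refine ⟨v, ?_, hv⟩
        simp only [Finset.mem_filter, Finset.mem_univ, true_and]
        intro hmem
        exact hv (congrFun hx'0 (⟨v, hmem⟩ : ↥V'))
      have h1 : 0 ≤ star x' ⬝ᵥ (Ω' *ᵥ x') := hΩ'.posSemidef.dotProduct_mulVec_nonneg x'
      have h2 : 0 < ∑ v ∈ Finset.univ.filter (fun v => v ∉ V'), x v * x v := by
        obtain ⟨v, hv1, hv2⟩ := hv
        exact Finset.sum_pos' (fun i _ => mul_self_nonneg _)
          ⟨v, hv1, mul_self_pos.mpr hv2⟩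
      linarith
    · have h1 : 0 < star x' ⬝ᵥ (Ω' *ᵥ x') := hΩ'.dotProduct_mulVec_pos hx'0
      have h2 : 0 ≤ ∑ v ∈ Finset.univ.filter (fun v => v ∉ V'), x v * x v :=
        Finset.sum_nonneg (fun i _ => mul_self_nonneg _)
      linarith

/-- For an ancestral `V'`, the `V' × V'` block of `φ_G(Λ, Ω)` is the value of the
parameterization of the induced subgraph at the restricted parameters. -/
lemma phi_restrict {n : ℕ} {D : Finset (Fin n × Fin n)} (hacyc : Acyclic D)
    {V' : Finset (Fin n)} (hanc : Ancestral D V')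
    (p : Matrix (Fin n) (Fin n) ℝ × Matrix (Fin n) (Fin n) ℝ)
    (hp : ∀ v w, p.1 v w ≠ 0 → (v, w) ∈ D) (v w : ↥V') :
    phi p ↑v ↑w =
      phi (p.1.submatrix (Subtype.val : ↥V' → Fin n) Subtype.val,
           p.2.submatrix (Subtype.val : ↥V' → Fin n) Subtype.val) v w := by
  classical
  set M : Matrix (Fin n) (Fin n) ℝ := 1 - p.1 with hM
  set Λ' := p.1.submatrix (Subtype.val : ↥V' → Fin n) Subtype.val with hΛ'
  set Ω' := p.2.submatrix (Subtype.val : ↥V' → Fin n) Subtype.val with hΩ'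
  set A : Matrix ↥V' ↥V' ℝ := 1 - Λ' with hA
  have hone : ∀ a b : ↥V',
      (1 : Matrix (Fin n) (Fin n) ℝ) ↑a ↑b = (1 : Matrix ↥V' ↥V' ℝ) a b := by
    intro a b
    by_cases hab : a = b
    · subst hab; simp
    · rw [Matrix.one_apply_ne hab,
        Matrix.one_apply_ne (fun h => hab (Subtype.ext h))]
  have hMdet : IsUnit M.det :=
    (Matrix.isUnit_iff_isUnit_det _).mp
      (isUnit_one_sub_of_acyclic (fun a b => (a, b) ∈ D) hacyc p.1 hp)
  have hAdet : IsUnit A.det := by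
    apply (Matrix.isUnit_iff_isUnit_det _).mp
    apply isUnit_one_sub_of_acyclic
      (fun a b : ↥V' => ((a : Fin n), (b : Fin n)) ∈ D)
    · intro a hcon
      exact hacyc ↑a (Relation.TransGen.lift Subtype.val (fun x y hxy => hxy) a a hcon)
    · intro a b hab
      exact hp ↑a ↑b hab
  have hAM : ∀ a b : ↥V', A a b = M ↑a ↑b := by
    intro a b
    simp only [hA, hM, Matrix.sub_apply, hΛ', Matrix.submatrix_apply, hone]
  have hM0 : ∀ u, u ∉ V' → ∀ b : ↥V', M u ↑b = 0 := by
    intro u hu b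
    have hne : u ≠ ↑b := fun h => hu (h ▸ b.2)
    have hp0 : p.1 u ↑b = 0 := by
      by_contra hcon
      exact hu (hanc u ↑b (Relation.ReflTransGen.single (hp _ _ hcon)) b.2)
    simp [hM, Matrix.sub_apply, Matrix.one_apply_ne hne, hp0]
  have hN0 : ∀ u, u ∉ V' → ∀ b : ↥V', M⁻¹ u ↑b = 0 := by
    intro u hu b
    have hy : (fun t : ↥V' => M⁻¹ u ↑t) ᵥ* A = 0 := by
      funext c
      show (∑ t : ↥V', M⁻¹ u ↑t * A t c) = 0
      calc ∑ t : ↥V', M⁻¹ u ↑t * A t c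
          = ∑ t : ↥V', M⁻¹ u ↑t * M ↑t ↑c :=
            Finset.sum_congr rfl (fun t _ => by rw [hAM])
        _ = ∑ t : Fin n, M⁻¹ u t * M t ↑c :=
            (sum_restrict V' (fun t => M⁻¹ u t * M t ↑c)
              (fun t ht => by show M⁻¹ u t * M t ↑c = 0; rw [hM0 t ht c, mul_zero])).symm
        _ = (M⁻¹ * M) u ↑c := (Matrix.mul_apply).symm
        _ = (1 : Matrix (Fin n) (Fin n) ℝ) u ↑c := by
            rw [Matrix.nonsing_inv_mul M hMdet]
        _ = 0 := Matrix.one_apply_ne (fun h => hu (h ▸ c.2))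
    have h2 : (fun t : ↥V' => M⁻¹ u ↑t) = 0 := by
      have h3 := congrArg (fun z => z ᵥ* A⁻¹) hy
      simpa [Matrix.vecMul_vecMul, Matrix.mul_nonsing_inv A hAdet,
        Matrix.vecMul_one, Matrix.zero_vecMul] using h3
    exact congrFun h2 b
  have hNA : A⁻¹ = M⁻¹.submatrix (Subtype.val : ↥V' → Fin n) Subtype.val := by
    apply Matrix.inv_eq_right_inv
    ext a b
    rw [Matrix.mul_apply]
    calc ∑ t : ↥V', A a t * M⁻¹.submatrix (Subtype.val : ↥V' → Fin n) Subtype.val t b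
        = ∑ t : ↥V', M ↑a ↑t * M⁻¹ ↑t ↑b :=
          Finset.sum_congr rfl (fun t _ => by rw [hAM]; rfl)
      _ = ∑ t : Fin n, M ↑a t * M⁻¹ t ↑b :=
          (sum_restrict V' (fun t => M ↑a t * M⁻¹ t ↑b)
            (fun t ht => by show M ↑a t * M⁻¹ t ↑b = 0; rw [hN0 t ht b, mul_zero])).symm
      _ = (M * M⁻¹) ↑a ↑b := (Matrix.mul_apply).symm
      _ = (1 : Matrix (Fin n) (Fin n) ℝ) ↑a ↑b := by
          rw [Matrix.mul_nonsing_inv M hMdet]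
      _ = (1 : Matrix ↥V' ↥V' ℝ) a b := hone a b
  show ((M⁻¹)ᵀ * p.2 * M⁻¹) ↑v ↑w = ((A⁻¹)ᵀ * Ω' * A⁻¹) v w
  rw [Matrix.mul_apply, Matrix.mul_apply]
  rw [sum_restrict V' (fun u => ((M⁻¹)ᵀ * p.2) ↑v u * M⁻¹ u ↑w)
    (fun u hu => by
      show ((M⁻¹)ᵀ * p.2) ↑v u * M⁻¹ u ↑w = 0; rw [hN0 u hu w, mul_zero])]
  apply Finset.sum_congr rfl
  intro u _
  congr 1
  · rw [Matrix.mul_apply, Matrix.mul_apply]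
    rw [sum_restrict V' (fun s => (M⁻¹)ᵀ ↑v s * p.2 s ↑u)
      (fun s hs => by
        show (M⁻¹)ᵀ ↑v s * p.2 s ↑u = 0
        rw [Matrix.transpose_apply, hN0 s hs v, zero_mul])]
    apply Finset.sum_congr rfl
    intro s _
    rw [Matrix.transpose_apply, Matrix.transpose_apply, hNA]
    rfl
  · rw [hNA]
    rfl

theorem stmt5 (n : ℕ) (D B : Finset (Fin n × Fin n))
    (hG : IsMixedGraph D B) (hacyc : Acyclic D)
    (V' : Finset (Fin n)) (hanc : Ancestral D V')
    (hsub : GenId (inducedE D V') (inducedE B V')) :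
    ∃ A, IsProperAlg (Theta (↑D : Set (Fin n × Fin n)) ↑B) A ∧
      ∀ p ∈ Theta (↑D : Set (Fin n × Fin n)) ↑B \ A,
        ∀ q ∈ Theta (↑D : Set (Fin n × Fin n)) ↑B \ A, phi p = phi q →
          (∀ v w : Fin n, v ∈ V' → w ∈ V' → (v, w) ∈ D → p.1 v w = q.1 v w) ∧
            ∀ v w : Fin n, v ∈ V' → w ∈ V' → p.2 v w = q.2 v w := by
  classical
  obtain ⟨A', ⟨f', hf'wit, hA'eq⟩, hinj⟩ := hsub
  set rmap : (Matrix (Fin n) (Fin n) ℝ × Matrix (Fin n) (Fin n) ℝ) →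
      (Matrix ↥V' ↥V' ℝ × Matrix ↥V' ↥V' ℝ) :=
    fun p => (p.1.submatrix (Subtype.val : ↥V' → Fin n) Subtype.val,
      p.2.submatrix (Subtype.val : ↥V' → Fin n) Subtype.val) with hrmap
  set F : MvPolynomial ((Fin n × Fin n) ⊕ (Fin n × Fin n)) ℝ :=
    MvPolynomial.rename
      (Sum.map (fun e : ↥V' × ↥V' => ((e.1 : Fin n), (e.2 : Fin n)))
               (fun e : ↥V' × ↥V' => ((e.1 : Fin n), (e.2 : Fin n)))) f' with hF
  have heval : ∀ p, polyEval F p = polyEval f' (rmap p) := by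
    intro p
    unfold polyEval
    rw [hF, MvPolynomial.eval_rename]
    congr 1
    congr 1
    funext e
    cases e <;> rfl
  have hmem : ∀ p ∈ Theta (↑D : Set (Fin n × Fin n)) ↑B,
      rmap p ∈ Theta (inducedE D V') (inducedE B V') := by
    intro p hp
    obtain ⟨hp1, hp2, hp3⟩ := hp
    refine ⟨fun a b hab => ?_, posDef_submatrix hp2, fun a b hne hab => ?_⟩
    · exact hp1 ↑a ↑b hab
    · exact hp3 ↑a ↑b (fun h => hne (Subtype.ext h)) hab
  refine ⟨{p ∈ Theta (↑D : Set (Fin n × Fin n)) ↑B | polyEval F p = 0},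
    ⟨F, ?_, rfl⟩, ?_⟩
  · obtain ⟨p₀, hp₀mem, hp₀ne⟩ := hf'wit
    obtain ⟨h01, h02, h03⟩ := hp₀mem
    have hr : rmap (extLambda V' p₀.1, extOmega V' p₀.2) = p₀ := by
      rw [hrmap]
      apply Prod.ext
      · ext a b
        simp [extLambda]
      · ext a b
        simp [extOmega]
    refine ⟨(extLambda V' p₀.1, extOmega V' p₀.2),
      ⟨?_, extOmega_posDef h02, ?_⟩, ?_⟩
    · intro v w hvw
      by_cases hv : v ∈ V'
      · by_cases hw : w ∈ V'
        · have : p₀.1 ⟨v, hv⟩ ⟨w, hw⟩ ≠ 0 := by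
            simpa [extLambda, hv, hw] using hvw
          exact h01 ⟨v, hv⟩ ⟨w, hw⟩ this
        · exact absurd (by simp [extLambda, hv, hw]) hvw
      · exact absurd (by simp [extLambda, hv]) hvw
    · intro v w hne hvw
      by_cases hv : v ∈ V'
      · by_cases hw : w ∈ V'
        · have : p₀.2 ⟨v, hv⟩ ⟨w, hw⟩ ≠ 0 := by
            simpa [extOmega, hv, hw] using hvw
          exact h03 ⟨v, hv⟩ ⟨w, hw⟩ (fun h => hne (congrArg Subtype.val h)) this
        · exact absurd (by simp [extOmega, hv, hw]) hvw
      · exact absurd (by simp [extOmega, hv, hne]) hvw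
    · rw [heval, hr]
      exact hp₀ne
  · intro p hp q hq hphi
    have hFp : polyEval F p ≠ 0 := fun h => hp.2 ⟨hp.1, h⟩
    have hFq : polyEval F q ≠ 0 := fun h => hq.2 ⟨hq.1, h⟩
    have hpnA' : rmap p ∉ A' := by
      rw [hA'eq]
      intro h
      exact hFp (by rw [heval]; exact h.2)
    have hqnA' : rmap q ∉ A' := by
      rw [hA'eq]
      intro h
      exact hFq (by rw [heval]; exact h.2)
    have hphir : phi (rmap p) = phi (rmap q) := by
      ext a b
      have e1 := phi_restrict hacyc hanc p hp.1.1 a b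
      have e2 := phi_restrict hacyc hanc q hq.1.1 a b
      rw [hrmap]
      rw [← e1, ← e2, hphi]
    have hreq : rmap p = rmap q :=
      hinj (rmap p) ⟨hmem p hp.1, hpnA'⟩ (rmap q) ⟨hmem q hq.1, hqnA'⟩ hphir
    constructor
    · intro v w hv hw _
      exact Matrix.ext_iff.mpr (congrArg Prod.fst hreq) ⟨v, hv⟩ ⟨w, hw⟩
    · intro v w hv hw
      exact Matrix.ext_iff.mpr (congrArg Prod.snd hreq) ⟨v, hv⟩ ⟨w, hw⟩
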